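/- For s a power of two and the paving rule h_i = 2^{v₂(i)} (2-adic valuation), the rectangles R_{i} = {i,...,i+h_i-1} × {s-i,...,s-i+h_i-1} for i = 1,...,s-1 are pairwise disjoint and their union equals {(a,b) ∈ {0,...,s-1}² : a + b ≥ s}. -/

import Mathlib

private lemma odd_part (i : ℕ) (hi : 0 < i) :
    ∃ c, i = 2 ^ padicValNat 2 i * c ∧ c % 2 = 1 := by
  refine ⟨i / 2 ^ i.factorization 2, ?_, ?_⟩
  · rw [Nat.factorization_def i Nat.prime_two]
    exact (Nat.ordProj_mul_ordCompl_eq_self i 2).symm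
  · have := Nat.not_dvd_ordCompl Nat.prime_two hi.ne'
    omega

private lemma val_ge (n m : ℕ) (hn : n ≠ 0) (hd : 2 ^ m ∣ n) : m ≤ padicValNat 2 n :=
  (padicValNat_dvd_iff_le hn).mp hd

private lemma key_exists (u v : ℕ) (huv : v < u) :
    ∃ i, v < i ∧ i ≤ u ∧ u < i + 2 ^ padicValNat 2 i ∧ i ≤ v + 2 ^ padicValNat 2 i := by
  obtain ⟨i, hi, hmax⟩ := Finset.exists_max_image (Finset.Ioc v u) (padicValNat 2)
    ⟨u, by simp [huv]⟩
  rw [Finset.mem_Ioc] at hi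
  obtain ⟨c, hc, hcodd⟩ := odd_part i (by omega)
  refine ⟨i, hi.1, hi.2, ?_, ?_⟩
  · by_contra hcon
    push_neg at hcon
    have h1 : i + 2 ^ padicValNat 2 i = 2 ^ (padicValNat 2 i + 1) * ((c + 1) / 2) := by
      have h2 : 2 * ((c + 1) / 2) = c + 1 := by omega
      calc i + 2 ^ padicValNat 2 i = 2 ^ padicValNat 2 i * c + 2 ^ padicValNat 2 i := by
            omega
        _ = 2 ^ padicValNat 2 i * (c + 1) := by ring
        _ = 2 ^ padicValNat 2 i * (2 * ((c + 1) / 2)) := by rw [h2]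
        _ = 2 ^ (padicValNat 2 i + 1) * ((c + 1) / 2) := by ring
    have h2 : padicValNat 2 i + 1 ≤ padicValNat 2 (i + 2 ^ padicValNat 2 i) :=
      val_ge _ _ (by positivity) ⟨(c + 1) / 2, h1⟩
    have h3 := hmax (i + 2 ^ padicValNat 2 i)
      (Finset.mem_Ioc.mpr ⟨Nat.lt_of_lt_of_le hi.1 (Nat.le_add_right i _), hcon⟩)
    omega
  · by_contra hcon
    push_neg at hcon
    have hppos : 0 < 2 ^ padicValNat 2 i := Nat.pow_pos (by norm_num)
    have hppos2 : 0 < 2 ^ (padicValNat 2 i + 1) := Nat.pow_pos (by norm_num)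
    have hih : 2 ^ padicValNat 2 i ≤ i := Nat.le_of_dvd (by omega) ⟨c, hc⟩
    have hpos : 0 < i - 2 ^ padicValNat 2 i := by omega
    have hc1 : c ≠ 1 := by
      intro hc1
      rw [hc1, mul_one] at hc
      omega
    have hc3 : 3 ≤ c := by omega
    have h1 : i - 2 ^ padicValNat 2 i = 2 ^ (padicValNat 2 i + 1) * ((c - 1) / 2) := by
      have h2 : 2 * ((c - 1) / 2) = c - 1 := by omega
      have key : 2 ^ (padicValNat 2 i + 1) * ((c - 1) / 2) + 2 ^ padicValNat 2 i = i := by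
        calc 2 ^ (padicValNat 2 i + 1) * ((c - 1) / 2) + 2 ^ padicValNat 2 i
            = 2 ^ padicValNat 2 i * (2 * ((c - 1) / 2)) + 2 ^ padicValNat 2 i := by ring
          _ = 2 ^ padicValNat 2 i * (c - 1) + 2 ^ padicValNat 2 i := by rw [h2]
          _ = 2 ^ padicValNat 2 i * (c - 1 + 1) := by ring
          _ = i := by rw [show c - 1 + 1 = c by omega, ← hc]
      omega
    have h2 : padicValNat 2 i + 1 ≤ padicValNat 2 (i - 2 ^ padicValNat 2 i) :=
      val_ge _ _ (by omega) ⟨(c - 1) / 2, h1⟩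
    have h3 := hmax (i - 2 ^ padicValNat 2 i)
      (Finset.mem_Ioc.mpr ⟨by omega, by omega⟩)
    omega

private lemma key_uniq (u v i j : ℕ)
    (hi : v < i ∧ i ≤ u ∧ u < i + 2 ^ padicValNat 2 i ∧ i ≤ v + 2 ^ padicValNat 2 i)
    (hj : v < j ∧ j ≤ u ∧ u < j + 2 ^ padicValNat 2 j ∧ j ≤ v + 2 ^ padicValNat 2 j) :
    i = j := by
  wlog hle : padicValNat 2 i ≤ padicValNat 2 j generalizing i j
  · exact (this j i hj hi (by omega)).symm
  obtain ⟨h1, h2, h3, h4⟩ := hi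
  obtain ⟨g1, g2, g3, g4⟩ := hj
  have hdi : 2 ^ padicValNat 2 i ∣ i := pow_padicValNat_dvd
  have hdj : 2 ^ padicValNat 2 i ∣ j :=
    dvd_trans (pow_dvd_pow 2 hle) pow_padicValNat_dvd
  -- j ∈ (i - h, i + h) and both multiples of h = 2^(v i)
  obtain ⟨a, ha⟩ := hdi
  obtain ⟨b, hb⟩ := hdj
  have hp : 0 < 2 ^ padicValNat 2 i := Nat.pow_pos (by norm_num)
  -- i - h ≤ v < j ≤ u < i + h
  have hlt : j < i + 2 ^ padicValNat 2 i := by omega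
  have hgt : i < j + 2 ^ padicValNat 2 i := by omega
  rw [ha, hb] at hlt hgt ⊢
  have : a = b := by
    rcases Nat.lt_trichotomy a b with h | h | h
    · nlinarith
    · exact h
    · nlinarith
  rw [this]

theorem stmt8 (k s : ℕ) (hk : 1 ≤ k) (hs : s = 2 ^ k)
    (h : ℕ → ℕ) (hh : ∀ i, h i = 2 ^ (padicValNat 2 i))
    (R : ℕ → Finset (ℕ × ℕ))
    (hR : ∀ i, R i = Finset.Ico i (i + h i) ×ˢ Finset.Ico (s - i) (s - i + h i)) :
    (∀ i ∈ Finset.Ico 1 s, ∀ j ∈ Finset.Ico 1 s, i ≠ j → Disjoint (R i) (R j)) ∧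
    (Finset.Ico 1 s).biUnion R =
      (Finset.range s ×ˢ Finset.range s).filter (fun p => s ≤ p.1 + p.2) := by
  -- basic facts about h i for i ∈ [1, s)
  have hfacts : ∀ i, 1 ≤ i → i < s → h i ≤ i ∧ i + h i ≤ s := by
    intro i h1 h2
    have hd : 2 ^ padicValNat 2 i ∣ i := pow_padicValNat_dvd
    have hhi : h i ≤ i := by rw [hh]; exact Nat.le_of_dvd (by omega) hd
    refine ⟨hhi, ?_⟩
    have hvk : padicValNat 2 i < k := by
      by_contra hc
      push_neg at hc
      have : 2 ^ k ≤ 2 ^ padicValNat 2 i := Nat.pow_le_pow_right (by norm_num) hc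
      rw [hh] at hhi; omega
    have hds : 2 ^ padicValNat 2 i ∣ s := hs ▸ pow_dvd_pow 2 hvk.le
    have hdsi : 2 ^ padicValNat 2 i ∣ s - i := Nat.dvd_sub hds hd
    have : 2 ^ padicValNat 2 i ≤ s - i := Nat.le_of_dvd (by omega) hdsi
    rw [hh]; omega
  -- membership characterization
  have hmem : ∀ i, 1 ≤ i → i < s → ∀ a b : ℕ,
      ((a, b) ∈ R i ↔ (b < s ∧ s - 1 - b < i ∧ i ≤ a ∧ a < i + 2 ^ padicValNat 2 i ∧
        i ≤ s - 1 - b + 2 ^ padicValNat 2 i)) := by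
    intro i h1 h2 a b
    obtain ⟨hA, hB⟩ := hfacts i h1 h2
    rw [hR, hh] at *
    simp only [Finset.mem_product, Finset.mem_Ico]
    omega
  constructor
  · intro i hi j hj hne
    rw [Finset.mem_Ico] at hi hj
    rw [Finset.disjoint_left]
    rintro ⟨a, b⟩ hxi hxj
    rw [hmem i hi.1 hi.2 a b] at hxi
    rw [hmem j hj.1 hj.2 a b] at hxj
    exact hne (key_uniq a (s - 1 - b) i j ⟨hxi.2.1, hxi.2.2.1, hxi.2.2.2.1, hxi.2.2.2.2⟩
      ⟨hxj.2.1, hxj.2.2.1, hxj.2.2.2.1, hxj.2.2.2.2⟩)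
  · ext ⟨a, b⟩
    simp only [Finset.mem_biUnion, Finset.mem_Ico, Finset.mem_filter, Finset.mem_product,
      Finset.mem_range]
    constructor
    · rintro ⟨i, ⟨h1, h2⟩, hx⟩
      rw [hmem i h1 h2 a b] at hx
      obtain ⟨hA, hB⟩ := hfacts i h1 h2
      rw [hh] at hA hB
      refine ⟨⟨by omega, hx.1⟩, by omega⟩
    · rintro ⟨⟨ha, hb⟩, hab⟩
      obtain ⟨i, g1, g2, g3, g4⟩ := key_exists a (s - 1 - b) (by omega)
      exact ⟨i, ⟨by omega, by omega⟩, (hmem i (by omega) (by omega) a b).mpr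
        ⟨hb, g1, g2, g3, g4⟩⟩
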